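/- Let w = (w_0, …, w_n) be positive integers with gcd 1. Then w_i divides w_0 + … + w_n for every i if and only if for every i and every integer k with 0 ≤ k < w_i, the sum over j of the fractional parts {w_j·k / w_i} is an integer. -/
import Mathlib


theorem gorenstein_iff_ages_integer (n : ℕ) (w : Fin (n + 1) → ℕ)
    (hpos : ∀ i, 0 < w i) (hgcd : Finset.univ.gcd w = 1) :
    (∀ i, w i ∣ ∑ j, w j) ↔
      (∀ i : Fin (n + 1), ∀ k : ℕ, k < w i →
        ∃ m : ℤ, (∑ j, Int.fract (((w j : ℚ) * k) / (w i : ℚ))) = (m : ℚ)) := by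
  have hwiq : ∀ i, (w i : ℚ) ≠ 0 := fun i => by
    exact_mod_cast (hpos i).ne'
  constructor
  · intro h i k hk
    obtain ⟨c, hc⟩ := h i
    refine ⟨(k * c : ℕ) - ∑ j, ⌊((w j : ℚ) * k) / (w i : ℚ)⌋, ?_⟩
    simp only [Int.fract]
    rw [Finset.sum_sub_distrib]
    push_cast
    congr 1
    rw [← Finset.sum_div]
    have : (∑ j, ((w j : ℚ) * k)) = (∑ j, (w j : ℚ)) * k := by
      rw [Finset.sum_mul]
    rw [this]
    have hS : (∑ j, (w j : ℚ)) = (w i : ℚ) * c := by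
      exact_mod_cast hc
    rw [hS, div_eq_iff (hwiq i)]
    ring
  · intro h i
    rcases eq_or_lt_of_le (Nat.one_le_iff_ne_zero.mpr (hpos i).ne') with hw | hw
    · exact hw ▸ one_dvd _
    · obtain ⟨m, hm⟩ := h i 1 hw
      simp only [Int.fract, Finset.sum_sub_distrib] at hm
      have key : (∑ j, ((w j : ℚ) * 1) / (w i : ℚ))
          = ((m + ∑ j, ⌊((w j : ℚ) * 1) / (w i : ℚ)⌋ : ℤ) : ℚ) := by
        push_cast
        linarith
      have h2 : ((∑ j, w j : ℕ) : ℚ)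
          = ((m + ∑ j, ⌊((w j : ℚ) * 1) / (w i : ℚ)⌋ : ℤ) : ℚ) * (w i : ℚ) := by
        rw [← key, ← Finset.sum_div, div_mul_cancel₀ _ (hwiq i)]
        push_cast
        simp
      have h3 : ((∑ j, w j : ℕ) : ℤ)
          = (m + ∑ j, ⌊((w j : ℚ) * 1) / (w i : ℚ)⌋) * (w i : ℤ) := by
        exact_mod_cast h2
      have : (w i : ℤ) ∣ ((∑ j, w j : ℕ) : ℤ) := ⟨_, h3.trans (mul_comm _ _)⟩
      exact_mod_cast this
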